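/- arXiv:1608.03647 — 9 statements merged into one kernel-verified Lean document; each statement's English description precedes it below -/
import Mathlib

section
/- Let V, V' : S × A → ℕ be value functions related by a Value-Ramp transition: there exist s, a, s' such that V'(s,a) = clamp(V(s,a) + max(V⟨s'⟩, R(s,a)) − K − V⟨s⟩) and V'(t,b) = V(t,b) for all (t,b) ≠ (s,a), where V⟨s⟩ = max over actions b of V(s,b). Define the ceiling ceil(V) = max(max over (t,b) of R(t,b), max over (t,b) of V(t,b)). Then ceil(V) ≥ ceil(V'). -/
variable {S A : Type*}

/-- The state value `V⟨s⟩ = max_{b ∈ A} V(s, b)`. -/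
def sval [Fintype A] (V : S → A → ℕ) (s : S) : ℕ := Finset.univ.sup (V s)

/-- The ceiling of a value function: the maximum over all rewards and all values. -/
def ceilV [Fintype S] [Fintype A] (R V : S → A → ℕ) : ℕ :=
  max (Finset.univ.sup fun p : S × A => R p.1 p.2)
      (Finset.univ.sup fun p : S × A => V p.1 p.2)

/-- A Value-Ramp transition never increases the ceiling: `ceil V ≥ ceil V'`. -/
theorem ceil_antitone [Fintype S] [Fintype A] [Nonempty S] [Nonempty A]
    (R : S → A → ℕ) (K : ℕ) (hK : 1 ≤ K) (V V' : S → A → ℕ) (s s' : S) (a : A)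
    (hupd : V' s a =
      ((V s a : ℤ) + max ((sval V s' : ℤ)) ((R s a : ℤ)) - (K : ℤ) - (sval V s : ℤ)).toNat)
    (hoth : ∀ t b, (t, b) ≠ (s, a) → V' t b = V t b) :
    ceilV R V' ≤ ceilV R V := by
  have key : ∀ t b, V' t b ≤ ceilV R V := by
    intro t b
    by_cases h : (t, b) = (s, a)
    · injection h with h1 h2; subst h1 h2
      rw [hupd]
      have hVsa : V t b ≤ sval V t := Finset.le_sup (Finset.mem_univ b)
      have hmax : max (sval V s') (R t b) ≤ ceilV R V := by
        apply max_le
        · exact le_trans (Finset.sup_le fun c _ =>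
            le_trans (Finset.le_sup (f := fun p : S × A => V p.1 p.2)
              (Finset.mem_univ (s', c))) (le_max_right _ _)) le_rfl
        · exact le_trans (Finset.le_sup (f := fun p : S × A => R p.1 p.2)
            (Finset.mem_univ (t, b))) (le_max_left _ _)
      have : ((V t b : ℤ) + max ((sval V s' : ℤ)) ((R t b : ℤ)) - (K : ℤ) - (sval V t : ℤ)).toNat
          ≤ max (sval V s') (R t b) := by
        omega
      exact le_trans this hmax
    · rw [hoth t b h]
      exact le_trans (Finset.le_sup (f := fun p : S × A => V p.1 p.2)
        (Finset.mem_univ (t, b))) (le_max_right _ _)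
  apply max_le (le_max_left _ _)
  exact Finset.sup_le fun p _ => key p.1 p.2
end

section
/- In a deterministic task, for every state-action pair (s,a) with deterministic successor s', the optimal value satisfies optval(s) ≥ max(clamp(optval(s') − K), clamp(R(s,a) − K)). -/
variable {S A : Type*}

/-- The trajectory of states visited in a deterministic task, starting at `s`
and following the action stream `as`. -/
def traj (δ : S → A → S) (s : S) (as : ℕ → A) : ℕ → S
  | 0 => s
  | i + 1 => δ (traj δ s as i) (as i)

/-- The value of the action-path of length `n` starting at `s` and following `as`:
`pval p = max_i clamp(R(sᵢ,aᵢ) − i·K)` (1-based `i`). -/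
def pathVal (δ : S → A → S) (R : S → A → ℕ) (K : ℕ) (s : S) (as : ℕ → A) (n : ℕ) : ℕ :=
  (Finset.range n).sup fun i => ((R (traj δ s as i) (as i) : ℤ) - ((i : ℕ) + 1) * K).toNat

/-- The optimal value of a state: the largest path value among action-paths starting at `s`. -/
noncomputable def optval (δ : S → A → S) (R : S → A → ℕ) (K : ℕ) (s : S) : ℕ :=
  sSup {v | ∃ (n : ℕ) (as : ℕ → A), 0 < n ∧ v = pathVal δ R K s as n}

lemma pathVal_bdd [Fintype S] [Fintype A] (δ : S → A → S) (R : S → A → ℕ) (K : ℕ) (s : S) :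
    BddAbove {v | ∃ (n : ℕ) (as : ℕ → A), 0 < n ∧ v = pathVal δ R K s as n} := by
  refine ⟨Finset.univ.sup (fun p : S × A => R p.1 p.2), ?_⟩
  rintro v ⟨n, as, -, rfl⟩
  apply Finset.sup_le
  intro i _
  rw [Int.toNat_le]
  have h1 : R (traj δ s as i) (as i) ≤ Finset.univ.sup (fun p : S × A => R p.1 p.2) :=
    Finset.le_sup (f := fun p : S × A => R p.1 p.2) (Finset.mem_univ (traj δ s as i, as i))
  have h2 : (0 : ℤ) ≤ ((i : ℕ) + 1) * K := by positivity
  omega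

/-- `optval(s) ≥ max (clamp (optval(δ(s,a)) − K)) (clamp (R(s,a) − K))`. -/
theorem optval_ge [Fintype S] [Fintype A] (δ : S → A → S) (R : S → A → ℕ) (K : ℕ)
    (hK : 1 ≤ K) (s : S) (a : A) :
    max (((optval δ R K (δ s a) : ℤ) - K).toNat) (((R s a : ℤ) - K).toNat)
      ≤ optval δ R K s := by
  have hbdd := pathVal_bdd δ R K s
  apply max_le
  · set s' := δ s a with hs'
    have hne : {v | ∃ (n : ℕ) (as : ℕ → A), 0 < n ∧ v = pathVal δ R K s' as n}.Nonempty :=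
      ⟨pathVal δ R K s' (fun _ => a) 1, 1, fun _ => a, one_pos, rfl⟩
    have hmem : optval δ R K s' ∈
        {v | ∃ (n : ℕ) (as : ℕ → A), 0 < n ∧ v = pathVal δ R K s' as n} :=
      Nat.sSup_mem hne (pathVal_bdd δ R K s')
    obtain ⟨n, as, hn, heq⟩ := hmem
    set as' : ℕ → A := fun i => if i = 0 then a else as (i - 1) with has'
    have htraj : ∀ i, traj δ s as' (i + 1) = traj δ s' as i := by
      intro i
      induction i with
      | zero => simp [traj, has', hs']
      | succ j ih =>
        show δ (traj δ s as' (j + 1)) (as' (j + 1)) = δ (traj δ s' as j) (as j)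
        rw [ih]; simp [has']
    refine le_trans ?_ (le_csSup hbdd ⟨n + 1, as', Nat.succ_pos n, rfl⟩)
    obtain ⟨i, hi, hval⟩ := Finset.exists_mem_eq_sup (Finset.range n)
      (Finset.nonempty_range_iff.mpr hn.ne')
      (fun i => ((R (traj δ s' as i) (as i) : ℤ) - ((i : ℕ) + 1) * K).toNat)
    have hterm : ((R (traj δ s as' (i + 1)) (as' (i + 1)) : ℤ)
        - (((i + 1 : ℕ) : ℤ) + 1) * K).toNat ≤ pathVal δ R K s as' (n + 1) :=
      Finset.le_sup (f := fun j => ((R (traj δ s as' j) (as' j) : ℤ) - ((j : ℕ) + 1) * K).toNat)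
        (Finset.mem_range.mpr (by have := Finset.mem_range.mp hi; omega))
    rw [htraj i] at hterm
    have hsimp : as' (i + 1) = as i := by simp [has']
    rw [hsimp] at hterm
    refine le_trans ?_ hterm
    rw [heq, pathVal, hval]
    have hc : (((i + 1 : ℕ) : ℤ) + 1) * (K : ℤ) = ((i : ℕ) + 1) * (K : ℤ) + K := by
      push_cast; ring
    rw [hc]
    have hc0 : (0 : ℤ) ≤ ((i : ℕ) + 1) * (K : ℤ) := by positivity
    generalize ((i : ℕ) + 1) * (K : ℤ) = c at hc0 ⊢
    omega
  · refine le_trans ?_ (le_csSup hbdd ⟨1, fun _ => a, one_pos, rfl⟩)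
    have : ((R s a : ℤ) - ((0 : ℕ) + 1) * K).toNat ≤ pathVal δ R K s (fun _ => a) 1 :=
      Finset.le_sup (f := fun j => ((R (traj δ s (fun _ => a) j) ((fun _ => a) j : A) : ℤ)
        - ((j : ℕ) + 1) * K).toNat) (Finset.mem_range.mpr one_pos)
    simpa [traj] using this
end

section
/- Every action-path p can be transformed into a cycle-free action-path p' (no repeated states among its state components) starting at the same state with pval(p') ≥ pval(p). -/
variable {S A : Type*}

/-- The `i`-th clamped term of a path value. -/
def pterm (δ : S → A → S) (R : S → A → ℕ) (K : ℕ) (s : S) (as : ℕ → A) (i : ℕ) : ℕ :=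
  ((R (traj δ s as i) (as i) : ℤ) - ((i : ℕ) + 1) * K).toNat

lemma pathVal_eq_sup_pterm (δ : S → A → S) (R : S → A → ℕ) (K : ℕ) (s : S) (as : ℕ → A)
    (n : ℕ) : pathVal δ R K s as n = (Finset.range n).sup (pterm δ R K s as) := rfl

/-- Key lemma: the last term of any path is dominated by the value of some cycle-free path. -/
lemma key_lemma (δ : S → A → S) (R : S → A → ℕ) (K : ℕ) :
    ∀ (n : ℕ) (s : S) (as : ℕ → A),
    ∃ (n' : ℕ) (as' : ℕ → A), 0 < n' ∧
      (∀ i < n', ∀ j < n', traj δ s as' i = traj δ s as' j → i = j) ∧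
      pterm δ R K s as n ≤ pathVal δ R K s as' n' := by
  intro n
  induction n using Nat.strong_induction_on with
  | _ n IH =>
    intro s as
    by_cases hdist : ∀ i < n + 1, ∀ j < n + 1, traj δ s as i = traj δ s as j → i = j
    · exact ⟨n + 1, as, Nat.succ_pos n, hdist,
        Finset.le_sup (Finset.mem_range.mpr (Nat.lt_succ_self n))⟩
    · push_neg at hdist
      obtain ⟨i₀, hi₀, j₀, hj₀, heq₀, hne₀⟩ := hdist
      obtain ⟨i, j, hij, hjn, heq⟩ : ∃ i j, i < j ∧ j ≤ n ∧ traj δ s as i = traj δ s as j := by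
        rcases lt_or_gt_of_ne hne₀ with h | h
        · exact ⟨i₀, j₀, h, by omega, heq₀⟩
        · exact ⟨j₀, i₀, h, by omega, heq₀.symm⟩
      set d := j - i with hd
      have hd0 : 0 < d := by omega
      have hidj : i + d = j := by omega
      set as'' : ℕ → A := fun k => if k < i then as k else as (k + d) with has''
      have h1 : ∀ k ≤ i, traj δ s as'' k = traj δ s as k := by
        intro k hk
        induction k with
        | zero => rfl
        | succ m ih =>
          have hmi : m < i := by omega
          simp only [traj, ih (by omega), has'']
          rw [if_pos hmi]
          exact congrArg (fun x => δ x (as m)) (ih (by omega))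
      have h2 : ∀ k, i ≤ k → traj δ s as'' k = traj δ s as (k + d) := by
        intro k hk
        induction k, hk using Nat.le_induction with
        | base => rw [h1 i le_rfl, hidj, heq]
        | succ m hm ih =>
          simp only [traj, ih, has'']
          rw [if_neg (by omega)]
          have : m + 1 + d = (m + d) + 1 := by omega
          rw [this, traj]
          exact congrArg (fun x => δ x (as (m + d))) ih
      have hnd : i ≤ n - d := by omega
      have hterm : pterm δ R K s as n ≤ pterm δ R K s as'' (n - d) := by
        unfold pterm
        rw [h2 (n - d) hnd]
        have hnn : n - d + d = n := by omega
        rw [hnn]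
        have haa : as'' (n - d) = as n := by
          rw [has'']
          simp only
          rw [if_neg (by omega), hnn]
        rw [haa]
        apply Int.toNat_le_toNat
        apply sub_le_sub_left
        have : ((n : ℤ) - d + 1) ≤ (n : ℤ) + 1 := by
          have : (d : ℤ) ≥ 0 := Int.ofNat_nonneg d
          omega
        have hc : ((n - d : ℕ) : ℤ) = (n : ℤ) - d := by omega
        rw [hc]
        exact mul_le_mul_of_nonneg_right this (Int.ofNat_nonneg K)
      obtain ⟨n', as', hn', hdist', hle'⟩ := IH (n - d) (by omega) s as''
      exact ⟨n', as', hn', hdist', hterm.trans hle'⟩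

/-- Every action-path can be transformed into a cycle-free action-path starting at the
same state whose value is at least as large. -/
theorem exists_cycleFree_path (δ : S → A → S) (R : S → A → ℕ) (K : ℕ) (hK : 1 ≤ K)
    (s : S) (n : ℕ) (hn : 0 < n) (as : ℕ → A) :
    ∃ (n' : ℕ) (as' : ℕ → A), 0 < n' ∧
      (∀ i < n', ∀ j < n', traj δ s as' i = traj δ s as' j → i = j) ∧
      pathVal δ R K s as n ≤ pathVal δ R K s as' n' := by
  obtain ⟨m, hm, hsup⟩ := Finset.exists_mem_eq_sup (Finset.range n)
    (Finset.nonempty_range_iff.mpr hn.ne') (pterm δ R K s as)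
  obtain ⟨n', as', hn', hdist', hle'⟩ := key_lemma δ R K m s as
  refine ⟨n', as', hn', hdist', ?_⟩
  rw [pathVal_eq_sup_pterm, hsup]
  exact hle'
end

section
/- In a deterministic task, for any transition (s,V) → (s',V') (with s' = δ(s,a)), if V is consistent and a ∈ pref(s,V), then V' = V. -/
variable {S A : Type*}

/-- `V` is valid: `V(s,a) ≤ clamp(max(V⟨δ(s,a)⟩, R(s,a)) − K)` for all `(s,a)`. -/
def validV [Fintype A] (δ : S → A → S) (R : S → A → ℕ) (K : ℕ) (V : S → A → ℕ) : Prop :=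
  ∀ s a, V s a ≤ (max ((sval V (δ s a) : ℤ)) ((R s a : ℤ)) - (K : ℤ)).toNat

/-- `V` is consistent: for every state `s` and every preferred action `a` at `s`,
`V⟨s⟩ = clamp(max(V⟨δ(s,a)⟩, R(s,a)) − K)`. -/
def consistentV [Fintype A] (δ : S → A → S) (R : S → A → ℕ) (K : ℕ) (V : S → A → ℕ) : Prop :=
  ∀ s a, V s a = sval V s →
    sval V s = (max ((sval V (δ s a) : ℤ)) ((R s a : ℤ)) - (K : ℤ)).toNat

/-- On a deterministic task, executing a preferred action from a configuration with a
consistent value function does not change the value function. -/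
theorem consistent_step_fixed [Fintype S] [Fintype A]
    (δ : S → A → S) (R : S → A → ℕ) (K : ℕ) (hK : 1 ≤ K)
    (V V' : S → A → ℕ) (s : S) (a : A)
    (hcons : consistentV δ R K V)
    (hpref : V s a = sval V s)
    (hupd : V' s a =
      ((V s a : ℤ) + max ((sval V (δ s a) : ℤ)) ((R s a : ℤ)) - (K : ℤ) - (sval V s : ℤ)).toNat)
    (hoth : ∀ t b, (t, b) ≠ (s, a) → V' t b = V t b) :
    V' = V := by
  funext t b
  by_cases h : (t, b) = (s, a)
  · rw [Prod.mk.injEq] at h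
    obtain ⟨h1, h2⟩ := h
    rw [h1, h2]
    have := hcons s a hpref
    rw [hupd, hpref]
    rw [this]
    congr 1
    ring
  · exact hoth t b h
end

section
/- If V is a valid value function on a deterministic task, then every Value-Ramp transition (s,V) → (s',V') does not decrease any state value: V⟨t⟩ ≤ V'⟨t⟩ for all states t. -/
variable {S A : Type*}

/-- If `V` is valid, a Value-Ramp transition does not decrease any state value. -/
theorem valid_step_sval_mono [Fintype S] [Fintype A]
    (δ : S → A → S) (R : S → A → ℕ) (K : ℕ) (hK : 1 ≤ K)
    (V V' : S → A → ℕ) (s : S) (a : A)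
    (hvalid : validV δ R K V)
    (hupd : V' s a =
      ((V s a : ℤ) + max ((sval V (δ s a) : ℤ)) ((R s a : ℤ)) - (K : ℤ) - (sval V s : ℤ)).toNat)
    (hoth : ∀ t b, (t, b) ≠ (s, a) → V' t b = V t b) :
    ∀ t : S, sval V t ≤ sval V' t := by
  intro t
  by_cases ht : t = s
  · subst ht
    rcases isEmpty_or_nonempty A with hA | hA
    · simp [sval]
    · obtain ⟨b, -, hbe⟩ := Finset.exists_mem_eq_sup Finset.univ Finset.univ_nonempty (V t)
      by_cases hba : b = a
      · subst hba
        have h1 := hvalid t b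
        have h2 : V' t b ≤ sval V' t := Finset.le_sup (Finset.mem_univ b)
        have hsv : sval V t = V t b := hbe
        rw [hsv] at hupd ⊢
        omega
      · calc sval V t = V' t b := by
              rw [show sval V t = V t b from hbe, hoth t b (by simp [hba])]
          _ ≤ sval V' t := Finset.le_sup (Finset.mem_univ b)
  · apply Finset.sup_le
    intro b _
    rw [← hoth t b (by simp [ht])]
    exact Finset.le_sup (Finset.mem_univ b)
end

section
/- Every infinite run of Value-Ramp on a task decomposes into an infinite sequence of value-sprints; equivalently, it is impossible that from some index i onward every transition satisfies Vⱼ⟨sⱼ⟩ ≤ Vⱼ⟨sⱼ₊₁⟩ − K. -/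
variable {S A : Type*}

/-- Every run is an infinite sequence of value-sprints: it is impossible that from some
index `i` onward every transition satisfies `Vⱼ⟨sⱼ⟩ ≤ Vⱼ⟨sⱼ₊₁⟩ − K`; equivalently,
sprint endpoints `Vⱼ⟨sⱼ⟩ > Vⱼ⟨sⱼ₊₁⟩ − K` occur beyond every index. -/
theorem run_is_sequence_of_sprints [Fintype S] [Fintype A] [Nonempty S] [Nonempty A]
    (tr : S → A → Finset S) (htr : ∀ s a, (tr s a).Nonempty)
    (R : S → A → ℕ) (K : ℕ) (hK : 1 ≤ K)
    (st : ℕ → S) (V : ℕ → S → A → ℕ) (act : ℕ → A)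
    (hstep : ∀ i, st (i + 1) ∈ tr (st i) (act i))
    (hupd : ∀ i, V (i + 1) (st i) (act i) =
      ((V i (st i) (act i) : ℤ) + max ((sval (V i) (st (i + 1)) : ℤ)) ((R (st i) (act i) : ℤ))
        - (K : ℤ) - (sval (V i) (st i) : ℤ)).toNat)
    (hoth : ∀ i t b, (t, b) ≠ (st i, act i) → V (i + 1) t b = V i t b) :
    ∀ i : ℕ, ∃ j, i ≤ j ∧ (sval (V j) (st (j + 1)) : ℤ) - K < (sval (V j) (st j) : ℤ) := by
  -- global bound on all values
  set B : ℕ := max (Finset.univ.sup (fun p : S × A => V 0 p.1 p.2))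
      (Finset.univ.sup (fun p : S × A => R p.1 p.2)) with hB
  have hR : ∀ s a, R s a ≤ B := fun s a =>
    le_trans (Finset.le_sup (f := fun p : S × A => R p.1 p.2) (Finset.mem_univ (s, a)))
      (le_max_right _ _)
  have hbound : ∀ j s a, V j s a ≤ B := by
    intro j
    induction j with
    | zero =>
      intro s a
      exact le_trans (Finset.le_sup (f := fun p : S × A => V 0 p.1 p.2)
        (Finset.mem_univ (s, a))) (le_max_left _ _)
    | succ j ih =>
      intro s a
      by_cases h : (s, a) = (st j, act j)
      · have hs : s = st j := congrArg Prod.fst h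
        have ha : a = act j := congrArg Prod.snd h
        rw [hs, ha, hupd j, Int.toNat_le]
        have h1 : (V j (st j) (act j) : ℤ) ≤ (sval (V j) (st j) : ℤ) := by
          exact_mod_cast Finset.le_sup (f := V j (st j)) (Finset.mem_univ (act j))
        have h2 : (sval (V j) (st (j + 1)) : ℤ) ≤ B := by
          have : sval (V j) (st (j + 1)) ≤ B := Finset.sup_le fun b _ => ih _ b
          exact_mod_cast this
        have h3 : (R (st j) (act j) : ℤ) ≤ B := by exact_mod_cast hR (st j) (act j)
        have hK' : (1 : ℤ) ≤ K := by exact_mod_cast hK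
        have := max_le h2 h3
        omega
      · rw [hoth j s a h]; exact ih s a
  have hsvalB : ∀ j s, sval (V j) s ≤ B := fun j s => Finset.sup_le fun b _ => hbound j s b
  -- by contradiction
  intro i
  by_contra hcon
  push_neg at hcon
  -- hcon : ∀ j, i ≤ j → sval (V j) (st j) ≤ sval (V j) (st (j+1)) - K
  have key : ∀ n : ℕ, (sval (V i) (st i) : ℤ) + n * K ≤ (sval (V (i + n)) (st (i + n)) : ℤ) := by
    intro n
    induction n with
    | zero => simp
    | succ n ih =>
      set j := i + n with hj
      have hcj := hcon j (by omega)
      have hne : st (j + 1) ≠ st j := by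
        intro heq
        rw [heq] at hcj
        have hK' : (1 : ℤ) ≤ K := by exact_mod_cast hK
        omega
      have heqv : sval (V (j + 1)) (st (j + 1)) = sval (V j) (st (j + 1)) := by
        unfold sval
        congr 1
        funext b
        exact hoth j (st (j + 1)) b (by simp [Prod.ext_iff]; intro h; exact absurd h hne)
      have : (sval (V j) (st j) : ℤ) + K ≤ (sval (V (j + 1)) (st (j + 1)) : ℤ) := by
        rw [heqv]; omega
      have hstep' : i + (n + 1) = j + 1 := by omega
      rw [hstep']
      push_cast
      push_cast at ih
      have hx : ((n : ℤ) + 1) * K = n * K + K := by ring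
      omega
  have h1 := key (B + 1)
  have h2 := hsvalB (i + (B + 1)) (st (i + (B + 1)))
  have hK' : (1 : ℤ) ≤ K := by exact_mod_cast hK
  have h2' : (sval (V (i + (B + 1))) (st (i + (B + 1))) : ℤ) ≤ B := by exact_mod_cast h2
  have hBK : (B + 1 : ℤ) * K ≥ B + 1 := by nlinarith
  push_cast at h1
  omega
end

section
/- Suppose in a run of Value-Ramp every transition from index i onward satisfies Vⱼ⟨sⱼ⟩ ≤ Vⱼ⟨sⱼ₊₁⟩ − K. Then for each j ≥ i: (1) the update increment d = max(Vⱼ⟨sⱼ₊₁⟩, R(sⱼ,aⱼ)) − K − Vⱼ⟨sⱼ⟩ is nonnegative, so no state value decreases; and (2) Vⱼ⟨sⱼ⟩ < Vⱼ₊₁⟨sⱼ₊₁⟩. -/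
variable {S A : Type*}

/-- If from index `i` onward every transition satisfies `Vⱼ⟨sⱼ⟩ ≤ Vⱼ⟨sⱼ₊₁⟩ − K`, then for
each `j ≥ i` the update increment `d` is nonnegative, no state value decreases, and
`Vⱼ⟨sⱼ⟩ < Vⱼ₊₁⟨sⱼ₊₁⟩`. -/
theorem sprint_tail_increases [Fintype S] [Fintype A] [Nonempty S] [Nonempty A]
    (tr : S → A → Finset S) (htr : ∀ s a, (tr s a).Nonempty)
    (R : S → A → ℕ) (K : ℕ) (hK : 1 ≤ K)
    (st : ℕ → S) (V : ℕ → S → A → ℕ) (act : ℕ → A)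
    (hstep : ∀ i, st (i + 1) ∈ tr (st i) (act i))
    (hupd : ∀ i, V (i + 1) (st i) (act i) =
      ((V i (st i) (act i) : ℤ) + max ((sval (V i) (st (i + 1)) : ℤ)) ((R (st i) (act i) : ℤ))
        - (K : ℤ) - (sval (V i) (st i) : ℤ)).toNat)
    (hoth : ∀ i t b, (t, b) ≠ (st i, act i) → V (i + 1) t b = V i t b)
    (i : ℕ)
    (hmono : ∀ j, i ≤ j → (sval (V j) (st j) : ℤ) ≤ (sval (V j) (st (j + 1)) : ℤ) - K) :
    ∀ j, i ≤ j →
      (0 ≤ max ((sval (V j) (st (j + 1)) : ℤ)) ((R (st j) (act j) : ℤ))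
          - (K : ℤ) - (sval (V j) (st j) : ℤ)) ∧
      (∀ t : S, sval (V j) t ≤ sval (V (j + 1)) t) ∧
      sval (V j) (st j) < sval (V (j + 1)) (st (j + 1)) := by
  intro j hj
  have hm := hmono j hj
  have hmax : (sval (V j) (st (j + 1)) : ℤ) ≤
      max ((sval (V j) (st (j + 1)) : ℤ)) ((R (st j) (act j) : ℤ)) := le_max_left _ _
  have hd : 0 ≤ max ((sval (V j) (st (j + 1)) : ℤ)) ((R (st j) (act j) : ℤ))
      - (K : ℤ) - (sval (V j) (st j) : ℤ) := by linarith
  have hpt : ∀ t b, V j t b ≤ V (j + 1) t b := by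
    intro t b
    by_cases h : (t, b) = (st j, act j)
    · obtain ⟨rfl, rfl⟩ := Prod.mk.injEq .. ▸ h
      rw [hupd j]
      omega
    · rw [hoth j t b h]
  have hsv : ∀ t : S, sval (V j) t ≤ sval (V (j + 1)) t := by
    intro t
    exact Finset.sup_mono_fun fun b _ => hpt t b
  refine ⟨hd, hsv, ?_⟩
  have h1 := hsv (st (j + 1))
  omega
end

section
/- In a navigation problem where the unique nonzero reward quantity M satisfies M > |S|·K and every nonzero reward occurrence equals M, for any two cycle-free rewarding action-paths p₁ and p₂ (in a deterministic connected navigation problem): if len(p₁) < len(p₂) then pval(p₁) > pval(p₂). Here len(p) is the index of the first rewarding pair on p. -/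
variable {S A : Type*}

/-- In a deterministic connected navigation problem (all nonzero rewards equal `M` with
`M > |S|·K`), of two cycle-free rewarding action-paths the one whose first reward comes
earlier has strictly larger value. -/
theorem shorter_rewarding_path_has_larger_value [Fintype S] [Fintype A]
    (δ : S → A → S) (R : S → A → ℕ) (K M : ℕ) (hK : 1 ≤ K)
    (hM : Fintype.card S * K < M)
    (hR : ∀ s a, R s a = 0 ∨ R s a = M)
    (hconn : ∀ s s' : S, ∃ (as : ℕ → A) (n : ℕ), traj δ s as n = s')
    (s₁ : S) (n₁ : ℕ) (hn₁ : 0 < n₁) (as₁ : ℕ → A)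
    (s₂ : S) (n₂ : ℕ) (hn₂ : 0 < n₂) (as₂ : ℕ → A)
    (hcf₁ : ∀ i < n₁, ∀ j < n₁, traj δ s₁ as₁ i = traj δ s₁ as₁ j → i = j)
    (hcf₂ : ∀ i < n₂, ∀ j < n₂, traj δ s₂ as₂ i = traj δ s₂ as₂ j → i = j)
    (l₁ l₂ : ℕ)
    (hl₁ : IsLeast {i | i < n₁ ∧ R (traj δ s₁ as₁ i) (as₁ i) = M} l₁)
    (hl₂ : IsLeast {i | i < n₂ ∧ R (traj δ s₂ as₂ i) (as₂ i) = M} l₂)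
    (hlen : l₁ < l₂) :
    pathVal δ R K s₂ as₂ n₂ < pathVal δ R K s₁ as₁ n₁ := by

  obtain ⟨⟨hl₁n, hl₁M⟩, _⟩ := hl₁
  obtain ⟨⟨hl₂n, hl₂M⟩, hl₂min⟩ := hl₂
  -- n₁ ≤ card S via injectivity
  have hinj : Function.Injective (fun i : Fin n₁ => traj δ s₁ as₁ i) := by
    intro i j h
    exact Fin.ext (hcf₁ i i.2 j j.2 h)
  have hcard : n₁ ≤ Fintype.card S := by
    simpa using Fintype.card_le_of_injective _ hinj
  have hl₁S : (l₁ + 1) * K ≤ Fintype.card S * K :=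
    Nat.mul_le_mul_right K (Nat.succ_le_of_lt (lt_of_lt_of_le hl₁n hcard))
  have hpos : (0:ℤ) < (M:ℤ) - ((l₁:ℕ) + 1) * K := by
    have : ((l₁ + 1) * K : ℕ) < M := lt_of_le_of_lt hl₁S hM
    push_cast
    push_cast at this
    linarith
  have h1 : ((M:ℤ) - ((l₁:ℕ) + 1) * K).toNat ≤ pathVal δ R K s₁ as₁ n₁ := by
    have := Finset.le_sup (f := fun i =>
      ((R (traj δ s₁ as₁ i) (as₁ i) : ℤ) - ((i : ℕ) + 1) * K).toNat)
      (Finset.mem_range.mpr hl₁n)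
    simpa [hl₁M, pathVal] using this
  have h2 : pathVal δ R K s₂ as₂ n₂ ≤ ((M:ℤ) - ((l₂:ℕ) + 1) * K).toNat := by
    apply Finset.sup_le
    intro i hi
    rcases hR (traj δ s₂ as₂ i) (as₂ i) with h0 | hMi
    · simp only [h0]
      have : ((0:ℤ) - ((i:ℕ)+1) * K).toNat = 0 := by
        apply Int.toNat_of_nonpos
        have : (0:ℤ) ≤ ((i:ℤ)+1)*K := by positivity
        linarith
      simp [this]
    · have hle : l₂ ≤ i := hl₂min ⟨Finset.mem_range.mp hi, hMi⟩
      rw [hMi]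
      apply Int.toNat_le_toNat
      have : ((l₂:ℤ)+1) * K ≤ ((i:ℤ)+1) * K := by
        have : (l₂:ℤ) ≤ i := by exact_mod_cast hle
        nlinarith [(by exact_mod_cast hK : (1:ℤ) ≤ K)]
      linarith
  have hlt : ((M:ℤ) - ((l₂:ℕ) + 1) * K).toNat < ((M:ℤ) - ((l₁:ℕ) + 1) * K).toNat := by
    have hab : (M:ℤ) - ((l₂:ℕ)+1)*K < (M:ℤ) - ((l₁:ℕ)+1)*K := by
      have : (l₁:ℤ) < l₂ := by exact_mod_cast hlen
      nlinarith [(by exact_mod_cast hK : (1:ℤ) ≤ K)]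
    omega
  omega
end

section
/- If all initial values are strictly below M, then along any Value-Ramp run on a navigation problem with reward quantities in {0, M} and M > K, every encountered value function V satisfies max over all (s,a) of V(s,a) < M. -/
variable {S A : Type*}

lemma sval_lt [Fintype A] {V : S → A → ℕ} {s : S} {M : ℕ} (hM : 0 < M)
    (h : ∀ b, V s b < M) : sval V s < M := by
  rw [sval, Finset.sup_lt_iff hM]
  intro b _; exact h b

lemma le_sval [Fintype A] (V : S → A → ℕ) (s : S) (b : A) : V s b ≤ sval V s :=
  Finset.le_sup (Finset.mem_univ b)

/-- On a navigation problem with rewards in `{0, M}` and `M > K`, if all initial values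
are strictly below `M`, then along any Value-Ramp run every encountered value stays
strictly below `M`. -/
theorem values_stay_below_M [Fintype S] [Fintype A] [Nonempty S] [Nonempty A]
    (tr : S → A → Finset S) (htr : ∀ s a, (tr s a).Nonempty)
    (R : S → A → ℕ) (K M : ℕ) (hK : 1 ≤ K) (hMK : K < M)
    (hR : ∀ s a, R s a = 0 ∨ R s a = M)
    (st : ℕ → S) (V : ℕ → S → A → ℕ) (act : ℕ → A)
    (hstep : ∀ i, st (i + 1) ∈ tr (st i) (act i))
    (hupd : ∀ i, V (i + 1) (st i) (act i) =
      ((V i (st i) (act i) : ℤ) + max ((sval (V i) (st (i + 1)) : ℤ)) ((R (st i) (act i) : ℤ))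
        - (K : ℤ) - (sval (V i) (st i) : ℤ)).toNat)
    (hoth : ∀ i t b, (t, b) ≠ (st i, act i) → V (i + 1) t b = V i t b)
    (hinit : ∀ t b, V 0 t b < M) :
    ∀ i t b, V i t b < M := by
  have hM : 0 < M := lt_of_le_of_lt (Nat.zero_le K) hMK
  intro i
  induction i with
  | zero => exact hinit
  | succ i ih =>
    intro t b
    by_cases h : (t, b) = (st i, act i)
    · obtain ⟨rfl, rfl⟩ : t = st i ∧ b = act i := Prod.mk.injEq .. ▸ h
      rw [hupd i]
      have hle : (V i (st i) (act i) : ℤ) ≤ (sval (V i) (st i) : ℤ) := by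
        exact_mod_cast le_sval (V i) (st i) (act i)
      have hsv' : (sval (V i) (st (i+1)) : ℤ) < M := by
        exact_mod_cast sval_lt hM (fun b => ih (st (i+1)) b)
      have hKM : (K : ℤ) < M := by exact_mod_cast hMK
      have hK1 : (1 : ℤ) ≤ K := by exact_mod_cast hK
      have key : (V i (st i) (act i) : ℤ) + max ((sval (V i) (st (i + 1)) : ℤ))
          ((R (st i) (act i) : ℤ)) - (K : ℤ) - (sval (V i) (st i) : ℤ) < M := by
        rcases hR (st i) (act i) with hr | hr <;> rw [hr] <;> push_cast
        · have : max ((sval (V i) (st (i + 1)) : ℤ)) 0 = sval (V i) (st (i+1)) :=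
            max_eq_left (by positivity)
          rw [this]; omega
        · have : max ((sval (V i) (st (i + 1)) : ℤ)) M ≤ M := max_le hsv'.le le_rfl
          omega
      omega
    · rw [hoth i t b h]; exact ih t b
end
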